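/- Eta-expansion in DAf, negative case: for every negative-output (succedent asynchronous) type N, the focused sequent [vec(N)] ⊢w N (with the antecedent occurrence of N focalised) is derivable in the weakly focalised calculus DAf. -/

import Mathlib

/-!
Formalisation of the displacement calculus with additives DA, the weakly
focalised calculus DAf (with and without Cut) and the strongly focalised
calculus DAFoc, following Morrill–Valentín.
-/

namespace DA

/-- Bias of atomic types. -/
inductive Bias : Type where
  | pos
  | neg
deriving DecidableEq

/-- Types of the displacement calculus with additives, indexed by their sort. -/
inductive Ty : ℕ → Type where
  | atom (b : Bias) (name : ℕ) (i : ℕ) : Ty i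
  | over {i j : ℕ} : Ty (i + j) → Ty j → Ty i                                   -- C / B
  | under {i j : ℕ} : Ty i → Ty (i + j) → Ty j                                  -- A \ C
  | prod {i j : ℕ} : Ty i → Ty j → Ty (i + j)                                   -- A • B
  | unitI : Ty 0                                                                -- I
  | circ {i j : ℕ} (k : ℕ) (hk : 1 ≤ k ∧ k ≤ i + 1) : Ty (i + j) → Ty j → Ty (i + 1)   -- C ↑ₖ B
  | infx {i j : ℕ} (k : ℕ) (hk : 1 ≤ k ∧ k ≤ i + 1) : Ty (i + 1) → Ty (i + j) → Ty j   -- A ↓ₖ C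
  | wprod {i j : ℕ} (k : ℕ) (hk : 1 ≤ k ∧ k ≤ i + 1) : Ty (i + 1) → Ty j → Ty (i + j)  -- A ⊙ₖ B
  | unitJ : Ty 1                                                                -- J
  | amp {i : ℕ} : Ty i → Ty i → Ty i                                            -- A & B
  | oplus {i : ℕ} : Ty i → Ty i → Ty i                                          -- A ⊕ B

/-- `posb A = true` iff `A` is synchronous as an output (positive output /
asynchronous as an input): positive atoms and `•`, `I`, `⊙ₖ`, `J`, `⊕`.
Otherwise `A` is synchronous as an input (negative atoms and `/`, `\`, `↑ₖ`,
`↓ₖ`, `&`). -/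
def posb {i : ℕ} : Ty i → Bool
  | .atom .pos _ _ => true
  | .atom .neg _ _ => false
  | .over _ _ => false
  | .under _ _ => false
  | .prod _ _ => true
  | .unitI => true
  | .circ _ _ _ _ => false
  | .infx _ _ _ _ => false
  | .wprod _ _ _ _ => true
  | .unitJ => true
  | .amp _ _ => false
  | .oplus _ _ => true

def isAtom {i : ℕ} : Ty i → Bool
  | .atom _ _ _ => true
  | _ => false

/-- Elements of configurations: the separator `1`, types of sort 0, and
figures `A{Δ₁ : … : Δ_{sA}}` of types of sort `> 0`; together with *boxed*
(focalised) variants of the latter two, used by the focalised calculi. -/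
inductive BTree : Type where
  | sep : BTree
  | type0 : Ty 0 → BTree
  | btype0 : Ty 0 → BTree
  | fig {i : ℕ} : Ty (i + 1) → (Fin (i + 1) → List BTree) → BTree
  | bfig {i : ℕ} : Ty (i + 1) → (Fin (i + 1) → List BTree) → BTree

/-- Configurations (possibly containing boxed, i.e. focalised, occurrences). -/
abbrev BConfig := List BTree

/-- The figure `vec(A)` of a type `A`. -/
def vecT {i : ℕ} (A : Ty i) : BTree :=
  match i, A with
  | 0, A => .type0 A
  | _ + 1, A => .fig A (fun _ => [BTree.sep])

def vec {i : ℕ} (A : Ty i) : BConfig := [vecT A]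

/-- The boxed (focalised) figure `[vec(A)]` of a type `A`. -/
def bvecT {i : ℕ} (A : Ty i) : BTree :=
  match i, A with
  | 0, A => .btype0 A
  | _ + 1, A => .bfig A (fun _ => [BTree.sep])

def bvec {i : ℕ} (A : Ty i) : BConfig := [bvecT A]

/-- The premise occurrence of an active antecedent subformula in a synchronous
rule: focalised (boxed) if it is synchronous in the antecedent (negative),
unfocalised if asynchronous (positive). -/
def fvec {i : ℕ} (A : Ty i) : BConfig := if posb A then vec A else bvec A

/-! Sort of a tree / configuration: its number of separators. -/
mutual
  inductive TreeSort : BTree → ℕ → Prop where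
    | sep : TreeSort .sep 1
    | type0 (A : Ty 0) : TreeSort (.type0 A) 0
    | btype0 (A : Ty 0) : TreeSort (.btype0 A) 0
    | fig {i : ℕ} (A : Ty (i + 1)) (args : Fin (i + 1) → BConfig) (ns : Fin (i + 1) → ℕ) :
        (∀ k, ConfigSort (args k) (ns k)) → TreeSort (.fig A args) (Finset.univ.sum ns)
    | bfig {i : ℕ} (A : Ty (i + 1)) (args : Fin (i + 1) → BConfig) (ns : Fin (i + 1) → ℕ) :
        (∀ k, ConfigSort (args k) (ns k)) → TreeSort (.bfig A args) (Finset.univ.sum ns)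
  inductive ConfigSort : BConfig → ℕ → Prop where
    | nil : ConfigSort [] 0
    | cons {t : BTree} {ts : BConfig} {n m : ℕ} :
        TreeSort t n → ConfigSort ts m → ConfigSort (t :: ts) (n + m)
end

/-! Number of boxed (focalised) formula occurrences in a tree / configuration. -/
mutual
  inductive TBoxes : BTree → ℕ → Prop where
    | sep : TBoxes .sep 0
    | type0 (A : Ty 0) : TBoxes (.type0 A) 0
    | btype0 (A : Ty 0) : TBoxes (.btype0 A) 1
    | fig {i : ℕ} (A : Ty (i + 1)) (args : Fin (i + 1) → BConfig) (ns : Fin (i + 1) → ℕ) :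
        (∀ k, CBoxes (args k) (ns k)) → TBoxes (.fig A args) (Finset.univ.sum ns)
    | bfig {i : ℕ} (A : Ty (i + 1)) (args : Fin (i + 1) → BConfig) (ns : Fin (i + 1) → ℕ) :
        (∀ k, CBoxes (args k) (ns k)) → TBoxes (.bfig A args) (Finset.univ.sum ns + 1)
  inductive CBoxes : BConfig → ℕ → Prop where
    | nil : CBoxes [] 0
    | cons {t : BTree} {ts : BConfig} {n m : ℕ} :
        TBoxes t n → CBoxes ts m → CBoxes (t :: ts) (n + m)
end

/-! The fold `Γ ⊗ ⟨Δ₁ : … : Δ_i⟩`: `FoldC Γ [Δ₁,…,Δ_i] res` holds iff `res` is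
the result of replacing the successive separators of `Γ` by `Δ₁,…,Δ_i`. -/
mutual
  inductive FoldT : BTree → List BConfig → BConfig → Prop where
    | sep (Δ : BConfig) : FoldT .sep [Δ] Δ
    | type0 (A : Ty 0) : FoldT (.type0 A) [] [.type0 A]
    | btype0 (A : Ty 0) : FoldT (.btype0 A) [] [.btype0 A]
    | fig {i : ℕ} (A : Ty (i + 1)) (args args' : Fin (i + 1) → BConfig)
        (reps : Fin (i + 1) → List BConfig) :
        (∀ k, FoldC (args k) (reps k) (args' k)) →
        FoldT (.fig A args) (List.ofFn reps).flatten [.fig A args']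
    | bfig {i : ℕ} (A : Ty (i + 1)) (args args' : Fin (i + 1) → BConfig)
        (reps : Fin (i + 1) → List BConfig) :
        (∀ k, FoldC (args k) (reps k) (args' k)) →
        FoldT (.bfig A args) (List.ofFn reps).flatten [.bfig A args']
  inductive FoldC : BConfig → List BConfig → BConfig → Prop where
    | nil : FoldC [] [] []
    | cons {t : BTree} {ts : BConfig} {r1 r2 : List BConfig} {c1 c2 : BConfig} :
        FoldT t r1 c1 → FoldC ts r2 c2 → FoldC (t :: ts) (r1 ++ r2) (c1 ++ c2)
end

/-- The `k`-th metalinguistic wrap `Δ |ₖ Γ`: `Wrap Δ k Γ res` holds iff `res`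
is the result of replacing the `k`-th separator of `Δ` by `Γ`. -/
def Wrap (Δ : BConfig) (k : ℕ) (Γ res : BConfig) : Prop :=
  ∃ n : ℕ, ConfigSort Δ n ∧
    FoldC Δ ((List.replicate n ([BTree.sep] : BConfig)).set (k - 1) Γ) res

/-! One-hole contexts `Δ₀(—)` for configurations: the hole is a configuration
position, either at the top level or nested inside a figure argument. -/
mutual
  inductive THole : Type where
    | fig {i : ℕ} (A : Ty (i + 1)) (args : Fin (i + 1) → BConfig) (k : Fin (i + 1))
        (c : CHole) : THole
    | bfig {i : ℕ} (A : Ty (i + 1)) (args : Fin (i + 1) → BConfig) (k : Fin (i + 1))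
        (c : CHole) : THole
  inductive CHole : Type where
    | top (pre post : BConfig) : CHole
    | deep (pre : BConfig) (t : THole) (post : BConfig) : CHole
end

/-! Plugging a configuration into a one-hole context. -/
mutual
  inductive PlugT : THole → BConfig → BTree → Prop where
    | fig {i : ℕ} (A : Ty (i + 1)) (args : Fin (i + 1) → BConfig) (k : Fin (i + 1))
        (c : CHole) (Γ plugged : BConfig) :
        PlugC c Γ plugged → PlugT (.fig A args k c) Γ (.fig A (Function.update args k plugged))
    | bfig {i : ℕ} (A : Ty (i + 1)) (args : Fin (i + 1) → BConfig) (k : Fin (i + 1))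
        (c : CHole) (Γ plugged : BConfig) :
        PlugC c Γ plugged → PlugT (.bfig A args k c) Γ (.bfig A (Function.update args k plugged))
  inductive PlugC : CHole → BConfig → BConfig → Prop where
    | top (pre post Γ : BConfig) : PlugC (.top pre post) Γ (pre ++ Γ ++ post)
    | deep (pre post Γ : BConfig) (t : THole) (tr : BTree) :
        PlugT t Γ tr → PlugC (.deep pre t post) Γ (pre ++ tr :: post)
end

/-- The data `Δ⟨—⟩ = Δ₀(— ⊗ ⟨Δ₁ : … : Δ_i⟩)` of a context in the generalised
sense of the displacement calculus. -/
structure Zone : Type where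
  hole : CHole
  reps : List BConfig

/-- `Sub Z Γ res` holds iff `res = Δ⟨Γ⟩` for the context `Δ⟨—⟩` given by `Z`,
i.e. `res = Δ₀(Γ ⊗ ⟨Δ₁ : … : Δ_i⟩)`. -/
def Sub (Z : Zone) (Γ res : BConfig) : Prop :=
  ∃ folded : BConfig, FoldC Γ Z.reps folded ∧ PlugC Z.hole folded res

/-- The displacement calculus with additives DA: `DADeriv Δ i A` is
derivability of the sequent `Δ ⇒ A` (identity axiom restricted to atoms). -/
inductive DADeriv : BConfig → ∀ i : ℕ, Ty i → Prop where
  | id (b : Bias) (name i : ℕ) :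
      DADeriv (vec (.atom b name i)) i (.atom b name i)
  | overR {i j : ℕ} {Γ : BConfig} {C : Ty (i + j)} {B : Ty j} :
      DADeriv (Γ ++ vec B) (i + j) C → DADeriv Γ i (.over C B)
  | overL {i j d : ℕ} {Γ s1 s2 : BConfig} {B : Ty j} {C : Ty (i + j)} {Z : Zone} {D : Ty d} :
      DADeriv Γ j B → Sub Z (vec C) s1 → DADeriv s1 d D →
      Sub Z (vec (.over C B) ++ Γ) s2 → DADeriv s2 d D
  | underR {i j : ℕ} {Γ : BConfig} {A : Ty i} {C : Ty (i + j)} :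
      DADeriv (vec A ++ Γ) (i + j) C → DADeriv Γ j (.under A C)
  | underL {i j d : ℕ} {Γ s1 s2 : BConfig} {A : Ty i} {C : Ty (i + j)} {Z : Zone} {D : Ty d} :
      DADeriv Γ i A → Sub Z (vec C) s1 → DADeriv s1 d D →
      Sub Z (Γ ++ vec (.under A C)) s2 → DADeriv s2 d D
  | prodR {i j : ℕ} {Γ1 Γ2 : BConfig} {A : Ty i} {B : Ty j} :
      DADeriv Γ1 i A → DADeriv Γ2 j B → DADeriv (Γ1 ++ Γ2) (i + j) (.prod A B)
  | prodL {i j d : ℕ} {s1 s2 : BConfig} {A : Ty i} {B : Ty j} {Z : Zone} {D : Ty d} :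
      Sub Z (vec A ++ vec B) s1 → DADeriv s1 d D →
      Sub Z (vec (.prod A B)) s2 → DADeriv s2 d D
  | unitIR : DADeriv [] 0 .unitI
  | unitIL {d : ℕ} {s1 s2 : BConfig} {Z : Zone} {D : Ty d} :
      Sub Z [] s1 → DADeriv s1 d D → Sub Z (vec .unitI) s2 → DADeriv s2 d D
  | circR {i j : ℕ} (k : ℕ) (hk : 1 ≤ k ∧ k ≤ i + 1) {Γ w : BConfig}
      {C : Ty (i + j)} {B : Ty j} :
      Wrap Γ k (vec B) w → DADeriv w (i + j) C → DADeriv Γ (i + 1) (.circ k hk C B)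
  | circL {i j d : ℕ} (k : ℕ) (hk : 1 ≤ k ∧ k ≤ i + 1) {Γ w s1 s2 : BConfig}
      {C : Ty (i + j)} {B : Ty j} {Z : Zone} {D : Ty d} :
      DADeriv Γ j B → Sub Z (vec C) s1 → DADeriv s1 d D →
      Wrap (vec (Ty.circ k hk C B)) k Γ w → Sub Z w s2 → DADeriv s2 d D
  | infxR {i j : ℕ} (k : ℕ) (hk : 1 ≤ k ∧ k ≤ i + 1) {Γ w : BConfig}
      {A : Ty (i + 1)} {C : Ty (i + j)} :
      Wrap (vec A) k Γ w → DADeriv w (i + j) C → DADeriv Γ j (.infx k hk A C)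
  | infxL {i j d : ℕ} (k : ℕ) (hk : 1 ≤ k ∧ k ≤ i + 1) {Γ w s1 s2 : BConfig}
      {A : Ty (i + 1)} {C : Ty (i + j)} {Z : Zone} {D : Ty d} :
      DADeriv Γ (i + 1) A → Sub Z (vec C) s1 → DADeriv s1 d D →
      Wrap Γ k (vec (Ty.infx k hk A C)) w → Sub Z w s2 → DADeriv s2 d D
  | wprodR {i j : ℕ} (k : ℕ) (hk : 1 ≤ k ∧ k ≤ i + 1) {Γ1 Γ2 w : BConfig}
      {A : Ty (i + 1)} {B : Ty j} :
      DADeriv Γ1 (i + 1) A → DADeriv Γ2 j B → Wrap Γ1 k Γ2 w →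
      DADeriv w (i + j) (.wprod k hk A B)
  | wprodL {i j d : ℕ} (k : ℕ) (hk : 1 ≤ k ∧ k ≤ i + 1) {w s1 s2 : BConfig}
      {A : Ty (i + 1)} {B : Ty j} {Z : Zone} {D : Ty d} :
      Wrap (vec A) k (vec B) w → Sub Z w s1 → DADeriv s1 d D →
      Sub Z (vec (.wprod k hk A B)) s2 → DADeriv s2 d D
  | unitJR : DADeriv [BTree.sep] 1 .unitJ
  | unitJL {d : ℕ} {s1 s2 : BConfig} {Z : Zone} {D : Ty d} :
      Sub Z [BTree.sep] s1 → DADeriv s1 d D → Sub Z (vec .unitJ) s2 → DADeriv s2 d D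
  | ampR {i : ℕ} {Γ : BConfig} {A B : Ty i} :
      DADeriv Γ i A → DADeriv Γ i B → DADeriv Γ i (.amp A B)
  | ampL1 {i d : ℕ} {s1 s2 : BConfig} {A B : Ty i} {Z : Zone} {D : Ty d} :
      Sub Z (vec A) s1 → DADeriv s1 d D → Sub Z (vec (.amp A B)) s2 → DADeriv s2 d D
  | ampL2 {i d : ℕ} {s1 s2 : BConfig} {A B : Ty i} {Z : Zone} {D : Ty d} :
      Sub Z (vec B) s1 → DADeriv s1 d D → Sub Z (vec (.amp A B)) s2 → DADeriv s2 d D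
  | oplusR1 {i : ℕ} {Γ : BConfig} {A B : Ty i} :
      DADeriv Γ i A → DADeriv Γ i (.oplus A B)
  | oplusR2 {i : ℕ} {Γ : BConfig} {A B : Ty i} :
      DADeriv Γ i B → DADeriv Γ i (.oplus A B)
  | oplusL {i d : ℕ} {s1 s2 s3 : BConfig} {A B : Ty i} {Z : Zone} {D : Ty d} :
      Sub Z (vec A) s1 → DADeriv s1 d D → Sub Z (vec B) s2 → DADeriv s2 d D →
      Sub Z (vec (.oplus A B)) s3 → DADeriv s3 d D

/-! Occurrence of a type satisfying `φ` somewhere in a configuration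
(as the head type of a tree/figure, possibly nested). -/
mutual
  inductive TOcc (φ : ∀ j : ℕ, Ty j → Prop) : BTree → Prop where
    | type0 {A : Ty 0} : φ 0 A → TOcc φ (.type0 A)
    | btype0 {A : Ty 0} : φ 0 A → TOcc φ (.btype0 A)
    | figHead {i : ℕ} {A : Ty (i + 1)} {args : Fin (i + 1) → BConfig} :
        φ (i + 1) A → TOcc φ (.fig A args)
    | bfigHead {i : ℕ} {A : Ty (i + 1)} {args : Fin (i + 1) → BConfig} :
        φ (i + 1) A → TOcc φ (.bfig A args)
    | figArg {i : ℕ} {A : Ty (i + 1)} {args : Fin (i + 1) → BConfig} (k : Fin (i + 1)) :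
        COcc φ (args k) → TOcc φ (.fig A args)
    | bfigArg {i : ℕ} {A : Ty (i + 1)} {args : Fin (i + 1) → BConfig} (k : Fin (i + 1)) :
        COcc φ (args k) → TOcc φ (.bfig A args)
  inductive COcc (φ : ∀ j : ℕ, Ty j → Prop) : BConfig → Prop where
    | head {t : BTree} {ts : BConfig} : TOcc φ t → COcc φ (t :: ts)
    | tail {t : BTree} {ts : BConfig} : COcc φ ts → COcc φ (t :: ts)
end

/-- The sequent `Δ ⊢ A` contains a complex (non-atomic) asynchronous formula
occurrence: a non-atomic positive type in the antecedent, or a non-atomic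
negative succedent. -/
def HasComplexAsync (Δ : BConfig) (i : ℕ) (A : Ty i) : Prop :=
  COcc (fun _ B => posb B = true ∧ isAtom B = false) Δ ∨
    (posb A = false ∧ isAtom A = false)

/-- A sequent (antecedent plus succedent-focus flag) contains at most one
focalised formula. -/
def AtMostOne (Δ : BConfig) (f : Bool) : Prop :=
  if f then CBoxes Δ 0 else (CBoxes Δ 0 ∨ CBoxes Δ 1)

/-- A sequent contains exactly one focalised formula. -/
def ExactlyOne (Δ : BConfig) (f : Bool) : Prop :=
  if f then CBoxes Δ 0 else CBoxes Δ 1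

/-- Side condition of the strongly focalised calculus: a sequent containing a
focalised formula contains no complex asynchronous formula occurrence (and
vice versa). -/
def Ok (strong : Bool) (Δ : BConfig) (f : Bool) (i : ℕ) (A : Ty i) : Prop :=
  strong = true → ¬ ((f = true ∨ ¬ CBoxes Δ 0) ∧ HasComplexAsync Δ i A)

/-- Focalised sequent calculus: `DW cuts strong Δ f i A` is derivability of
the sequent `Δ ⊢ A`, whose succedent is focalised iff `f = true` and whose
focalised antecedent formulas are the boxed occurrences of `Δ`.
`cuts = true` allows the Cut rules (weakly focalised calculus DAf);
`cuts = false` is Cut-free DAf; `strong = true` additionally imposes the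
strong focalisation discipline (DAFoc, taken with `cuts = false`). -/
inductive DW (cuts strong : Bool) : BConfig → Bool → ∀ i : ℕ, Ty i → Prop where
  -- identity axioms, restricted to atoms
  | idP (name i : ℕ) :
      DW cuts strong (vec (.atom .pos name i)) true i (.atom .pos name i)
  | idQ (name i : ℕ) :
      DW cuts strong (bvec (.atom .neg name i)) false i (.atom .neg name i)
  -- focusing rules
  | focR {i : ℕ} {Δ : BConfig} {P : Ty i} :
      posb P = true →
      DW cuts strong Δ true i P →
      AtMostOne Δ false → Ok strong Δ false i P →
      DW cuts strong Δ false i P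
  | focL {j d : ℕ} {Q : Ty j} {D : Ty d} {Z : Zone} {s1 s2 : BConfig} :
      posb Q = false →
      Sub Z (bvec Q) s1 → DW cuts strong s1 false d D →
      Sub Z (vec Q) s2 → AtMostOne s2 false → Ok strong s2 false d D →
      DW cuts strong s2 false d D
  -- asynchronous right rules
  | overR {i j : ℕ} {Γ : BConfig} {C : Ty (i + j)} {B : Ty j} :
      DW cuts strong (Γ ++ vec B) false (i + j) C →
      AtMostOne Γ false → Ok strong Γ false i (.over C B) →
      DW cuts strong Γ false i (.over C B)
  | underR {i j : ℕ} {Γ : BConfig} {A : Ty i} {C : Ty (i + j)} :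
      DW cuts strong (vec A ++ Γ) false (i + j) C →
      AtMostOne Γ false → Ok strong Γ false j (.under A C) →
      DW cuts strong Γ false j (.under A C)
  | circR {i j : ℕ} (k : ℕ) (hk : 1 ≤ k ∧ k ≤ i + 1) {Γ w : BConfig}
      {C : Ty (i + j)} {B : Ty j} :
      Wrap Γ k (vec B) w → DW cuts strong w false (i + j) C →
      AtMostOne Γ false → Ok strong Γ false (i + 1) (.circ k hk C B) →
      DW cuts strong Γ false (i + 1) (.circ k hk C B)
  | infxR {i j : ℕ} (k : ℕ) (hk : 1 ≤ k ∧ k ≤ i + 1) {Γ w : BConfig}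
      {A : Ty (i + 1)} {C : Ty (i + j)} :
      Wrap (vec A) k Γ w → DW cuts strong w false (i + j) C →
      AtMostOne Γ false → Ok strong Γ false j (.infx k hk A C) →
      DW cuts strong Γ false j (.infx k hk A C)
  | ampR {i : ℕ} {Γ : BConfig} {A B : Ty i} :
      DW cuts strong Γ false i A → DW cuts strong Γ false i B →
      AtMostOne Γ false → Ok strong Γ false i (.amp A B) →
      DW cuts strong Γ false i (.amp A B)
  -- asynchronous left rules
  | prodL {i j d : ℕ} {f : Bool} {s1 s2 : BConfig} {A : Ty i} {B : Ty j}
      {Z : Zone} {D : Ty d} :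
      Sub Z (vec A ++ vec B) s1 → DW cuts strong s1 f d D →
      Sub Z (vec (.prod A B)) s2 → AtMostOne s2 f → Ok strong s2 f d D →
      DW cuts strong s2 f d D
  | unitIL {d : ℕ} {f : Bool} {s1 s2 : BConfig} {Z : Zone} {D : Ty d} :
      Sub Z [] s1 → DW cuts strong s1 f d D →
      Sub Z (vec .unitI) s2 → AtMostOne s2 f → Ok strong s2 f d D →
      DW cuts strong s2 f d D
  | wprodL {i j d : ℕ} (k : ℕ) (hk : 1 ≤ k ∧ k ≤ i + 1) {f : Bool}
      {w s1 s2 : BConfig} {A : Ty (i + 1)} {B : Ty j} {Z : Zone} {D : Ty d} :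
      Wrap (vec A) k (vec B) w → Sub Z w s1 → DW cuts strong s1 f d D →
      Sub Z (vec (.wprod k hk A B)) s2 → AtMostOne s2 f → Ok strong s2 f d D →
      DW cuts strong s2 f d D
  | unitJL {d : ℕ} {f : Bool} {s1 s2 : BConfig} {Z : Zone} {D : Ty d} :
      Sub Z [BTree.sep] s1 → DW cuts strong s1 f d D →
      Sub Z (vec .unitJ) s2 → AtMostOne s2 f → Ok strong s2 f d D →
      DW cuts strong s2 f d D
  | oplusL {i d : ℕ} {f : Bool} {s1 s2 s3 : BConfig} {A B : Ty i} {Z : Zone} {D : Ty d} :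
      Sub Z (vec A) s1 → DW cuts strong s1 f d D →
      Sub Z (vec B) s2 → DW cuts strong s2 f d D →
      Sub Z (vec (.oplus A B)) s3 → AtMostOne s3 f → Ok strong s3 f d D →
      DW cuts strong s3 f d D
  -- synchronous left rules (active formula focalised)
  | overL {i j d : ℕ} {Γ s1 s2 : BConfig} {B : Ty j} {C : Ty (i + j)} {Z : Zone} {D : Ty d} :
      DW cuts strong Γ (posb B) j B →
      Sub Z (fvec C) s1 → DW cuts strong s1 false d D →
      Sub Z (bvec (.over C B) ++ Γ) s2 → AtMostOne s2 false → Ok strong s2 false d D →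
      DW cuts strong s2 false d D
  | underL {i j d : ℕ} {Γ s1 s2 : BConfig} {A : Ty i} {C : Ty (i + j)} {Z : Zone} {D : Ty d} :
      DW cuts strong Γ (posb A) i A →
      Sub Z (fvec C) s1 → DW cuts strong s1 false d D →
      Sub Z (Γ ++ bvec (.under A C)) s2 → AtMostOne s2 false → Ok strong s2 false d D →
      DW cuts strong s2 false d D
  | circL {i j d : ℕ} (k : ℕ) (hk : 1 ≤ k ∧ k ≤ i + 1) {Γ w s1 s2 : BConfig}
      {C : Ty (i + j)} {B : Ty j} {Z : Zone} {D : Ty d} :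
      DW cuts strong Γ (posb B) j B →
      Sub Z (fvec C) s1 → DW cuts strong s1 false d D →
      Wrap (bvec (Ty.circ k hk C B)) k Γ w → Sub Z w s2 →
      AtMostOne s2 false → Ok strong s2 false d D →
      DW cuts strong s2 false d D
  | infxL {i j d : ℕ} (k : ℕ) (hk : 1 ≤ k ∧ k ≤ i + 1) {Γ w s1 s2 : BConfig}
      {A : Ty (i + 1)} {C : Ty (i + j)} {Z : Zone} {D : Ty d} :
      DW cuts strong Γ (posb A) (i + 1) A →
      Sub Z (fvec C) s1 → DW cuts strong s1 false d D →
      Wrap Γ k (bvec (Ty.infx k hk A C)) w → Sub Z w s2 →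
      AtMostOne s2 false → Ok strong s2 false d D →
      DW cuts strong s2 false d D
  | ampL1 {i d : ℕ} {s1 s2 : BConfig} {A B : Ty i} {Z : Zone} {D : Ty d} :
      Sub Z (fvec A) s1 → DW cuts strong s1 false d D →
      Sub Z (bvec (.amp A B)) s2 → AtMostOne s2 false → Ok strong s2 false d D →
      DW cuts strong s2 false d D
  | ampL2 {i d : ℕ} {s1 s2 : BConfig} {A B : Ty i} {Z : Zone} {D : Ty d} :
      Sub Z (fvec B) s1 → DW cuts strong s1 false d D →
      Sub Z (bvec (.amp A B)) s2 → AtMostOne s2 false → Ok strong s2 false d D →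
      DW cuts strong s2 false d D
  -- synchronous right rules (succedent focalised)
  | prodR {i j : ℕ} {Γ1 Γ2 : BConfig} {A : Ty i} {B : Ty j} :
      DW cuts strong Γ1 (posb A) i A → DW cuts strong Γ2 (posb B) j B →
      AtMostOne (Γ1 ++ Γ2) true → Ok strong (Γ1 ++ Γ2) true (i + j) (.prod A B) →
      DW cuts strong (Γ1 ++ Γ2) true (i + j) (.prod A B)
  | unitIR : DW cuts strong [] true 0 .unitI
  | wprodR {i j : ℕ} (k : ℕ) (hk : 1 ≤ k ∧ k ≤ i + 1) {Γ1 Γ2 w : BConfig}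
      {A : Ty (i + 1)} {B : Ty j} :
      DW cuts strong Γ1 (posb A) (i + 1) A → DW cuts strong Γ2 (posb B) j B →
      Wrap Γ1 k Γ2 w →
      AtMostOne w true → Ok strong w true (i + j) (.wprod k hk A B) →
      DW cuts strong w true (i + j) (.wprod k hk A B)
  | unitJR : DW cuts strong [BTree.sep] true 1 .unitJ
  | oplusR1 {i : ℕ} {Γ : BConfig} {A B : Ty i} :
      DW cuts strong Γ (posb A) i A →
      AtMostOne Γ true → Ok strong Γ true i (.oplus A B) →
      DW cuts strong Γ true i (.oplus A B)
  | oplusR2 {i : ℕ} {Γ : BConfig} {A B : Ty i} :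
      DW cuts strong Γ (posb B) i B →
      AtMostOne Γ true → Ok strong Γ true i (.oplus A B) →
      DW cuts strong Γ true i (.oplus A B)
  -- Cut rules (weakly focalised calculus only)
  | pcut1 {j d : ℕ} {f : Bool} {Γ s1 s2 : BConfig} {P : Ty j} {Z : Zone} {C : Ty d} :
      cuts = true → posb P = true →
      DW cuts strong Γ true j P →
      Sub Z (vec P) s1 → DW cuts strong s1 f d C →
      Sub Z Γ s2 → AtMostOne s2 f →
      DW cuts strong s2 f d C
  | pcut2 {j d : ℕ} {Γ s1 s2 : BConfig} {N : Ty j} {Z : Zone} {C : Ty d} :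
      cuts = true → posb N = false →
      DW cuts strong Γ false j N →
      Sub Z (bvec N) s1 → DW cuts strong s1 false d C →
      Sub Z Γ s2 → AtMostOne s2 false →
      DW cuts strong s2 false d C
  | ncut1 {j d : ℕ} {Γ s1 s2 : BConfig} {P : Ty j} {Z : Zone} {C : Ty d} :
      cuts = true → posb P = true →
      DW cuts strong Γ false j P →
      Sub Z (vec P) s1 → CBoxes s1 0 → DW cuts strong s1 false d C →
      Sub Z Γ s2 → AtMostOne s2 false →
      DW cuts strong s2 false d C
  | ncut2 {j d : ℕ} {f : Bool} {Γ s1 s2 : BConfig} {N : Ty j} {Z : Zone} {C : Ty d} :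
      cuts = true → posb N = false →
      CBoxes Γ 0 → DW cuts strong Γ false j N →
      Sub Z (vec N) s1 → DW cuts strong s1 f d C →
      Sub Z Γ s2 → AtMostOne s2 f →
      DW cuts strong s2 f d C

/-- The weakly focalised calculus DAf. -/
abbrev DAf (Δ : BConfig) (f : Bool) (i : ℕ) (A : Ty i) : Prop := DW true false Δ f i A

/-- Cut-free DAf. -/
abbrev DAfCutFree (Δ : BConfig) (f : Bool) (i : ℕ) (A : Ty i) : Prop := DW false false Δ f i A

/-- The strongly focalised calculus DAFoc. -/
abbrev DAFoc (Δ : BConfig) (f : Bool) (i : ℕ) (A : Ty i) : Prop := DW false true Δ f i A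

/-- Transport of a type along an equality of sorts. -/
def tcast {i j : ℕ} (h : i = j) (A : Ty i) : Ty j := h ▸ A

end DA
namespace DA

section Helpers

open List

private lemma flatten_ofFn_singleton {α : Type*} :
    ∀ {n : ℕ} (g : Fin n → α), (List.ofFn fun m => [g m]).flatten = List.ofFn g := by
  intro n
  induction n with
  | zero => intro g; simp
  | succ n ih =>
      intro g
      rw [List.ofFn_succ, List.flatten_cons, ih, List.ofFn_succ, List.singleton_append]

private lemma flatten_ofFn_replicate {α : Type*} (x : α) :
    ∀ {n : ℕ} (ns : Fin n → ℕ),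
      (List.ofFn fun k => List.replicate (ns k) x).flatten
        = List.replicate (Finset.univ.sum ns) x := by
  intro n
  induction n with
  | zero => intro ns; simp
  | succ n ih =>
      intro ns
      rw [List.ofFn_succ, List.flatten_cons, ih, Fin.sum_univ_succ, List.replicate_add]

private lemma ofFn_ite_set {α : Type*} {n : ℕ} (idx : Fin n) (a b : α) :
    (List.ofFn fun m => if m = idx then a else b)
      = (List.replicate n b).set idx.val a := by
  apply List.ext_getElem
  · simp
  · intro i h1 h2
    have hi : i < n := by simpa using h1
    simp only [List.getElem_ofFn, List.getElem_set, List.getElem_replicate]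
    by_cases h : idx.val = i
    · have h' : (⟨i, hi⟩ : Fin n) = idx := Fin.ext h.symm
      simp [h, h']
    · have h' : ¬ (⟨i, hi⟩ : Fin n) = idx := fun he => h (by rw [← he])
      simp [h, h']

private lemma sum_ite_one {n : ℕ} (idx : Fin (n + 1)) (a : ℕ) :
    (Finset.univ.sum fun m : Fin (n + 1) => if m = idx then a else 1) = a + n := by
  have h : (fun m : Fin (n + 1) => if m = idx then a else 1)
      = Function.update (fun _ : Fin (n+1) => 1) idx a := by
    funext m
    by_cases h : m = idx <;> simp [h, Function.update]
  rw [h, Finset.sum_update_of_mem (Finset.mem_univ idx), Finset.sum_const,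
    Finset.card_sdiff_of_subset (by simp), Finset.card_univ, Fintype.card_fin]
  simp

private lemma sum_ite_zero {n : ℕ} (idx : Fin (n + 1)) (a : ℕ) :
    (Finset.univ.sum fun m : Fin (n + 1) => if m = idx then a else 0) = a := by
  simp

/-- Update of default-separator arguments at one position. -/
private def upd {n : ℕ} (idx : Fin n) (Γ : BConfig) : Fin n → BConfig :=
  fun m => if m = idx then Γ else [BTree.sep]

private lemma foldC_single {t : BTree} {r : List BConfig} {c : BConfig}
    (h : FoldT t r c) : FoldC [t] r c := by
  simpa using FoldC.cons h FoldC.nil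

private lemma foldC_sep (Γ : BConfig) : FoldC [BTree.sep] [Γ] Γ :=
  foldC_single (FoldT.sep Γ)

private lemma foldC_append {Γ1 Γ2 : BConfig} {r1 r2 : List BConfig} {c1 c2 : BConfig}
    (h1 : FoldC Γ1 r1 c1) (h2 : FoldC Γ2 r2 c2) :
    FoldC (Γ1 ++ Γ2) (r1 ++ r2) (c1 ++ c2) := by
  induction Γ1 generalizing r1 c1 with
  | nil => cases h1; simpa
  | cons t ts ih =>
      cases h1 with
      | cons ht hts =>
          rw [List.cons_append, List.append_assoc, List.append_assoc]
          exact FoldC.cons ht (ih hts)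

private lemma idFold_vec : ∀ {n : ℕ} (A : Ty n),
    FoldC (vec A) (List.replicate n [BTree.sep]) (vec A) := by
  intro n A
  match n, A with
  | 0, A => simpa [vec, vecT] using FoldC.cons (FoldT.type0 A) FoldC.nil
  | n + 1, A =>
      have h := FoldT.fig A (fun _ => [BTree.sep]) (fun _ => [BTree.sep])
        (fun _ => [[BTree.sep]]) (fun _ => foldC_sep [BTree.sep])
      have e : ((List.ofFn fun _ : Fin (n+1) => [([BTree.sep] : BConfig)]).flatten)
          = List.replicate (n + 1) [BTree.sep] := by
        rw [flatten_ofFn_singleton]; simp [List.replicate_succ]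
      rw [e] at h
      simpa [vec, vecT] using foldC_single h

private lemma idFold_bvec : ∀ {n : ℕ} (A : Ty n),
    FoldC (bvec A) (List.replicate n [BTree.sep]) (bvec A) := by
  intro n A
  match n, A with
  | 0, A => simpa [bvec, bvecT] using FoldC.cons (FoldT.btype0 A) FoldC.nil
  | n + 1, A =>
      have h := FoldT.bfig A (fun _ => [BTree.sep]) (fun _ => [BTree.sep])
        (fun _ => [[BTree.sep]]) (fun _ => foldC_sep [BTree.sep])
      have e : ((List.ofFn fun _ : Fin (n+1) => [([BTree.sep] : BConfig)]).flatten)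
          = List.replicate (n + 1) [BTree.sep] := by
        rw [flatten_ofFn_singleton]; simp [List.replicate_succ]
      rw [e] at h
      simpa [bvec, bvecT] using foldC_single h

private lemma idFold_fvec {n : ℕ} (A : Ty n) :
    FoldC (fvec A) (List.replicate n [BTree.sep]) (fvec A) := by
  unfold fvec
  by_cases h : posb A <;> simp [h, idFold_vec, idFold_bvec]

private lemma idFold_append {Γ1 Γ2 : BConfig} {a b : ℕ}
    (h1 : FoldC Γ1 (List.replicate a [BTree.sep]) Γ1)
    (h2 : FoldC Γ2 (List.replicate b [BTree.sep]) Γ2) :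
    FoldC (Γ1 ++ Γ2) (List.replicate (a + b) [BTree.sep]) (Γ1 ++ Γ2) := by
  rw [List.replicate_add]
  exact foldC_append h1 h2

private lemma idFold_upd_core {n : ℕ} (idx : Fin (n + 1)) {Γ : BConfig} {m : ℕ}
    (hΓ : FoldC Γ (List.replicate m [BTree.sep]) Γ) (q : Fin (n + 1)) :
    FoldC (upd idx Γ q) (List.replicate (if q = idx then m else 1) [BTree.sep])
      (upd idx Γ q) := by
  unfold upd
  by_cases h : q = idx
  · simpa [h] using hΓ
  · simpa [h] using foldC_sep [BTree.sep]

private lemma idFold_fig_upd {n : ℕ} (A : Ty (n + 1)) (idx : Fin (n + 1))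
    {Γ : BConfig} {m : ℕ} (hΓ : FoldC Γ (List.replicate m [BTree.sep]) Γ) :
    FoldC [BTree.fig A (upd idx Γ)] (List.replicate (m + n) [BTree.sep])
      [BTree.fig A (upd idx Γ)] := by
  have h := FoldT.fig A (upd idx Γ) (upd idx Γ)
    (fun q => List.replicate (if q = idx then m else 1) [BTree.sep])
    (idFold_upd_core idx hΓ)
  have e : ((List.ofFn fun q : Fin (n+1) =>
      List.replicate (if q = idx then m else 1) ([BTree.sep] : BConfig)).flatten)
      = List.replicate (m + n) [BTree.sep] := by
    rw [flatten_ofFn_replicate, sum_ite_one]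
  rw [e] at h
  exact foldC_single h

private lemma idFold_bfig_upd {n : ℕ} (A : Ty (n + 1)) (idx : Fin (n + 1))
    {Γ : BConfig} {m : ℕ} (hΓ : FoldC Γ (List.replicate m [BTree.sep]) Γ) :
    FoldC [BTree.bfig A (upd idx Γ)] (List.replicate (m + n) [BTree.sep])
      [BTree.bfig A (upd idx Γ)] := by
  have h := FoldT.bfig A (upd idx Γ) (upd idx Γ)
    (fun q => List.replicate (if q = idx then m else 1) [BTree.sep])
    (idFold_upd_core idx hΓ)
  have e : ((List.ofFn fun q : Fin (n+1) =>
      List.replicate (if q = idx then m else 1) ([BTree.sep] : BConfig)).flatten)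
      = List.replicate (m + n) [BTree.sep] := by
    rw [flatten_ofFn_replicate, sum_ite_one]
  rw [e] at h
  exact foldC_single h

private lemma configSort_single {t : BTree} {n : ℕ} (h : TreeSort t n) :
    ConfigSort [t] n := by
  simpa using ConfigSort.cons h ConfigSort.nil

private lemma configSort_sep : ConfigSort [BTree.sep] 1 :=
  configSort_single TreeSort.sep

private lemma configSort_vec : ∀ {n : ℕ} (A : Ty n), ConfigSort (vec A) n := by
  intro n A
  match n, A with
  | 0, A => exact configSort_single (TreeSort.type0 A)
  | n + 1, A =>
      have h := TreeSort.fig A (fun _ => [BTree.sep]) (fun _ => 1)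
        (fun _ => configSort_sep)
      have e : (Finset.univ.sum fun _ : Fin (n + 1) => 1) = n + 1 := by simp
      rw [e] at h
      exact configSort_single h

private lemma configSort_bvec : ∀ {n : ℕ} (A : Ty n), ConfigSort (bvec A) n := by
  intro n A
  match n, A with
  | 0, A => exact configSort_single (TreeSort.btype0 A)
  | n + 1, A =>
      have h := TreeSort.bfig A (fun _ => [BTree.sep]) (fun _ => 1)
        (fun _ => configSort_sep)
      have e : (Finset.univ.sum fun _ : Fin (n + 1) => 1) = n + 1 := by simp
      rw [e] at h
      exact configSort_single h

private lemma cboxes_single {t : BTree} {n : ℕ} (h : TBoxes t n) : CBoxes [t] n := by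
  simpa using CBoxes.cons h CBoxes.nil

private lemma cboxes_sep : CBoxes [BTree.sep] 0 := cboxes_single TBoxes.sep

private lemma cboxes_vec : ∀ {n : ℕ} (A : Ty n), CBoxes (vec A) 0 := by
  intro n A
  match n, A with
  | 0, A => exact cboxes_single (TBoxes.type0 A)
  | n + 1, A =>
      have h := TBoxes.fig A (fun _ => [BTree.sep]) (fun _ => 0) (fun _ => cboxes_sep)
      have e : (Finset.univ.sum fun _ : Fin (n + 1) => 0) = 0 := by simp
      rw [e] at h
      exact cboxes_single h

private lemma cboxes_bvec : ∀ {n : ℕ} (A : Ty n), CBoxes (bvec A) 1 := by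
  intro n A
  match n, A with
  | 0, A => exact cboxes_single (TBoxes.btype0 A)
  | n + 1, A =>
      have h := TBoxes.bfig A (fun _ => [BTree.sep]) (fun _ => 0) (fun _ => cboxes_sep)
      have e : (Finset.univ.sum fun _ : Fin (n + 1) => 0) + 1 = 1 := by simp
      rw [e] at h
      exact cboxes_single h

private lemma cboxes_append {Γ1 Γ2 : BConfig} {a b : ℕ}
    (h1 : CBoxes Γ1 a) (h2 : CBoxes Γ2 b) : CBoxes (Γ1 ++ Γ2) (a + b) := by
  induction Γ1 generalizing a with
  | nil => cases h1; simpa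
  | cons t ts ih =>
      cases h1 with
      | cons ht hts =>
          rw [List.cons_append, Nat.add_assoc]
          exact CBoxes.cons ht (ih hts)

private lemma cboxes_upd_core {n : ℕ} (idx : Fin (n + 1)) {Γ : BConfig} {b : ℕ}
    (hΓ : CBoxes Γ b) (q : Fin (n + 1)) :
    CBoxes (upd idx Γ q) (if q = idx then b else 0) := by
  unfold upd
  by_cases h : q = idx
  · simpa [h] using hΓ
  · simpa [h] using cboxes_sep

private lemma cboxes_fig_upd {n : ℕ} (A : Ty (n + 1)) (idx : Fin (n + 1))
    {Γ : BConfig} {b : ℕ} (hΓ : CBoxes Γ b) :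
    CBoxes [BTree.fig A (upd idx Γ)] b := by
  have h := TBoxes.fig A (upd idx Γ) (fun q => if q = idx then b else 0)
    (cboxes_upd_core idx hΓ)
  rw [sum_ite_zero] at h
  exact cboxes_single h

private lemma cboxes_bfig_upd {n : ℕ} (A : Ty (n + 1)) (idx : Fin (n + 1))
    {Γ : BConfig} (hΓ : CBoxes Γ 0) :
    CBoxes [BTree.bfig A (upd idx Γ)] 1 := by
  have h := TBoxes.bfig A (upd idx Γ) (fun q => if q = idx then 0 else 0)
    (by simpa using cboxes_upd_core idx hΓ)
  have e : (Finset.univ.sum fun q : Fin (n + 1) => if q = idx then 0 else 0) + 1 = 1 := by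
    simp
  rw [e] at h
  exact cboxes_single h

/-- The trivial zone with `m` separator replacements. -/
private def trivZone (m : ℕ) : Zone :=
  ⟨CHole.top [] [], List.replicate m [BTree.sep]⟩

private lemma sub_triv {Γ : BConfig} {m : ℕ}
    (h : FoldC Γ (List.replicate m [BTree.sep]) Γ) : Sub (trivZone m) Γ Γ :=
  ⟨Γ, h, by simpa [trivZone] using PlugC.top [] [] Γ⟩

private lemma ok_false {Δ : BConfig} {f : Bool} {i : ℕ} {A : Ty i} :
    Ok false Δ f i A := by
  intro h; cases h

private lemma amo_false0 {Δ : BConfig} (h : CBoxes Δ 0) : AtMostOne Δ false :=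
  Or.inl h

private lemma amo_false1 {Δ : BConfig} (h : CBoxes Δ 1) : AtMostOne Δ false :=
  Or.inr h

private lemma amo_true {Δ : BConfig} (h : CBoxes Δ 0) : AtMostOne Δ true := h

/-- Wrap of the figure `vec A` (sort `n+1 ≥ 1`). -/
private lemma wrap_vec {n : ℕ} (A : Ty (n + 1)) {k : ℕ} (hk : 1 ≤ k ∧ k ≤ n + 1)
    (Γ : BConfig) :
    Wrap (vec A) k Γ [BTree.fig A (upd ⟨k - 1, by omega⟩ Γ)] := by
  refine ⟨n + 1, configSort_vec A, ?_⟩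
  set idx : Fin (n + 1) := ⟨k - 1, by omega⟩ with hidx
  have h := FoldT.fig A (fun _ => [BTree.sep]) (upd idx Γ)
    (fun q => [upd idx Γ q]) ?_
  · have e : ((List.ofFn fun q : Fin (n + 1) => [upd idx Γ q]).flatten)
        = (List.replicate (n + 1) ([BTree.sep] : BConfig)).set (k - 1) Γ := by
      rw [flatten_ofFn_singleton]
      have : (List.ofFn fun q : Fin (n+1) => upd idx Γ q)
          = (List.replicate (n + 1) ([BTree.sep] : BConfig)).set idx.val Γ :=
        ofFn_ite_set idx Γ [BTree.sep]
      rw [this]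
    rw [e] at h
    simpa [vec, vecT] using foldC_single h
  · intro q
    unfold upd
    by_cases h : q = idx
    · simpa [h] using foldC_sep Γ
    · simpa [h] using foldC_sep [BTree.sep]

private lemma wrap_bvec {n : ℕ} (A : Ty (n + 1)) {k : ℕ} (hk : 1 ≤ k ∧ k ≤ n + 1)
    (Γ : BConfig) :
    Wrap (bvec A) k Γ [BTree.bfig A (upd ⟨k - 1, by omega⟩ Γ)] := by
  refine ⟨n + 1, configSort_bvec A, ?_⟩
  set idx : Fin (n + 1) := ⟨k - 1, by omega⟩ with hidx
  have h := FoldT.bfig A (fun _ => [BTree.sep]) (upd idx Γ)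
    (fun q => [upd idx Γ q]) ?_
  · have e : ((List.ofFn fun q : Fin (n + 1) => [upd idx Γ q]).flatten)
        = (List.replicate (n + 1) ([BTree.sep] : BConfig)).set (k - 1) Γ := by
      rw [flatten_ofFn_singleton]
      have : (List.ofFn fun q : Fin (n+1) => upd idx Γ q)
          = (List.replicate (n + 1) ([BTree.sep] : BConfig)).set idx.val Γ :=
        ofFn_ite_set idx Γ [BTree.sep]
      rw [this]
    rw [e] at h
    simpa [bvec, bvecT] using foldC_single h
  · intro q
    unfold upd
    by_cases h : q = idx
    · simpa [h] using foldC_sep Γ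
    · simpa [h] using foldC_sep [BTree.sep]

end Helpers

end DA
namespace DA

section Eta

private lemma etaU {i : ℕ} {A : Ty i}
    (h1 : posb A = true → DW true false (vec A) true i A)
    (h2 : posb A = false → DW true false (bvec A) false i A) :
    DW true false (vec A) (posb A) i A := by
  cases hb : posb A with
  | true => exact h1 hb
  | false =>
      exact DW.focL hb (sub_triv (idFold_bvec A)) (h2 hb)
        (sub_triv (idFold_vec A)) (amo_false0 (cboxes_vec A)) ok_false

private lemma etaF {i : ℕ} {A : Ty i}
    (h1 : posb A = true → DW true false (vec A) true i A)
    (h2 : posb A = false → DW true false (bvec A) false i A) :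
    DW true false (fvec A) false i A := by
  cases hb : posb A with
  | true =>
      have e : fvec A = vec A := by simp [fvec, hb]
      rw [e]
      exact DW.focR hb (h1 hb) (amo_false0 (cboxes_vec A)) ok_false
  | false =>
      have e : fvec A = bvec A := by simp [fvec, hb]
      rw [e]
      exact h2 hb

private theorem eta_main : ∀ {i : ℕ} (A : Ty i),
    (posb A = true → DW true false (vec A) true i A) ∧
    (posb A = false → DW true false (bvec A) false i A) := by
  intro i A
  induction A with
  | atom b name i =>
      cases b with
      | pos => exact ⟨fun _ => DW.idP name i, fun h => by simp [posb] at h⟩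
      | neg => exact ⟨fun h => by simp [posb] at h, fun _ => DW.idQ name i⟩
  | under A C ihA ihC =>
      refine ⟨fun h => by simp [posb] at h, fun _ => ?_⟩
      refine DW.underR ?_ (amo_false1 (cboxes_bvec _)) ok_false
      exact DW.underL (etaU ihA.1 ihA.2)
        (sub_triv (idFold_fvec C)) (etaF ihC.1 ihC.2)
        (sub_triv (idFold_append (idFold_vec A) (idFold_bvec (Ty.under A C))))
        (amo_false1 (by simpa using cboxes_append (cboxes_vec A) (cboxes_bvec (Ty.under A C))))
        ok_false
  | prod A B ihA ihB =>
      refine ⟨fun _ => ?_, fun h => by simp [posb] at h⟩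
      exact DW.prodL (f := true)
        (sub_triv (idFold_append (idFold_vec A) (idFold_vec B)))
        (DW.prodR (etaU ihA.1 ihA.2) (etaU ihB.1 ihB.2)
          (amo_true (by simpa using cboxes_append (cboxes_vec A) (cboxes_vec B)))
          ok_false)
        (sub_triv (idFold_vec (Ty.prod A B)))
        (amo_true (cboxes_vec _)) ok_false
  | unitI =>
      refine ⟨fun _ => ?_, fun h => by simp [posb] at h⟩
      exact DW.unitIL (f := true)
        (sub_triv (m := 0) FoldC.nil) DW.unitIR
        (sub_triv (idFold_vec Ty.unitI))
        (amo_true (cboxes_vec _)) ok_false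
  | circ k hk C B ihC ihB =>
      rename_i i j
      refine ⟨fun h => by simp [posb] at h, fun _ => ?_⟩
      have hw := wrap_bvec (Ty.circ k hk C B) hk (vec B)
      have hfold := idFold_bfig_upd (Ty.circ k hk C B)
        ⟨k - 1, by omega⟩ (idFold_vec B)
      rw [Nat.add_comm j i] at hfold
      refine DW.circR k hk hw ?_ (amo_false1 (cboxes_bvec _)) ok_false
      exact DW.circL k hk (etaU ihB.1 ihB.2) (sub_triv (idFold_fvec C))
        (etaF ihC.1 ihC.2) hw (sub_triv hfold)
        (amo_false1 (cboxes_bfig_upd (Ty.circ k hk C B)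
          ⟨k - 1, by omega⟩ (cboxes_vec B)))
        ok_false
  | infx k hk A C ihA ihC =>
      rename_i i j
      refine ⟨fun h => by simp [posb] at h, fun _ => ?_⟩
      have hw := wrap_vec A hk (bvec (Ty.infx k hk A C))
      have hfold := idFold_fig_upd A ⟨k - 1, by omega⟩
        (idFold_bvec (Ty.infx k hk A C))
      rw [Nat.add_comm j i] at hfold
      refine DW.infxR k hk hw ?_ (amo_false1 (cboxes_bvec _)) ok_false
      exact DW.infxL k hk (etaU ihA.1 ihA.2) (sub_triv (idFold_fvec C))
        (etaF ihC.1 ihC.2) hw (sub_triv hfold)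
        (amo_false1 (cboxes_fig_upd A ⟨k - 1, by omega⟩
          (cboxes_bvec (Ty.infx k hk A C))))
        ok_false
  | wprod k hk A B ihA ihB =>
      rename_i i j
      refine ⟨fun _ => ?_, fun h => by simp [posb] at h⟩
      have hw := wrap_vec A hk (vec B)
      have hfold := idFold_fig_upd A ⟨k - 1, by omega⟩ (idFold_vec B)
      rw [Nat.add_comm j i] at hfold
      exact DW.wprodL k hk (f := true) hw (sub_triv hfold)
        (DW.wprodR k hk (etaU ihA.1 ihA.2) (etaU ihB.1 ihB.2) hw
          (amo_true (cboxes_fig_upd A ⟨k - 1, by omega⟩ (cboxes_vec B)))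
          ok_false)
        (sub_triv (idFold_vec (Ty.wprod k hk A B)))
        (amo_true (cboxes_vec _)) ok_false
  | unitJ =>
      refine ⟨fun _ => ?_, fun h => by simp [posb] at h⟩
      exact DW.unitJL (f := true)
        (sub_triv (m := 1) (foldC_sep [BTree.sep])) DW.unitJR
        (sub_triv (idFold_vec Ty.unitJ))
        (amo_true (cboxes_vec _)) ok_false
  | amp A B ihA ihB =>
      refine ⟨fun h => by simp [posb] at h, fun _ => ?_⟩
      refine DW.ampR ?_ ?_ (amo_false1 (cboxes_bvec _)) ok_false
      · exact DW.ampL1 (sub_triv (idFold_fvec A)) (etaF ihA.1 ihA.2)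
          (sub_triv (idFold_bvec (Ty.amp A B)))
          (amo_false1 (cboxes_bvec _)) ok_false
      · exact DW.ampL2 (sub_triv (idFold_fvec B)) (etaF ihB.1 ihB.2)
          (sub_triv (idFold_bvec (Ty.amp A B)))
          (amo_false1 (cboxes_bvec _)) ok_false
  | oplus A B ihA ihB =>
      refine ⟨fun _ => ?_, fun h => by simp [posb] at h⟩
      exact DW.oplusL (f := true)
        (sub_triv (idFold_vec A))
        (DW.oplusR1 (etaU ihA.1 ihA.2) (amo_true (cboxes_vec A)) ok_false)
        (sub_triv (idFold_vec B))
        (DW.oplusR2 (etaU ihB.1 ihB.2) (amo_true (cboxes_vec B)) ok_false)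
        (sub_triv (idFold_vec (Ty.oplus A B)))
        (amo_true (cboxes_vec _)) ok_false
  | _ =>
      rename_i C B ihC ihB
      refine ⟨fun h => by simp [posb] at h, fun _ => ?_⟩
      refine DW.overR ?_ (amo_false1 (cboxes_bvec _)) ok_false
      exact DW.overL (etaU ihB.1 ihB.2)
        (sub_triv (idFold_fvec C)) (etaF ihC.1 ihC.2)
        (sub_triv (idFold_append (idFold_bvec (Ty.over C B)) (idFold_vec B)))
        (amo_false1 (by simpa using cboxes_append (cboxes_bvec (Ty.over C B)) (cboxes_vec B)))
        ok_false

end Eta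

/-- Eta-expansion in DAf, negative case: for every negative-output
(succedent asynchronous) type `N`, the focused sequent `[vec(N)] ⊢w N` (with
the antecedent occurrence of `N` focalised) is derivable in the weakly
focalised calculus DAf. -/
theorem eta_expansion_DAf_negative :
    ∀ (i : ℕ) (N : Ty i), posb N = false → DAf (bvec N) false i N :=
  fun _ N h => (eta_main N).2 h

end DA
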